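/- Let G⃗ be a finite directed rooted tree with all edges directed away from the root. Then adim(G⃗) = bdim(G⃗). -/

import Mathlib

open SimpleGraph Finset

/-- `A` is an adjacency resolving set of `G`. -/
def IsAdjResolving {V : Type*} (G : SimpleGraph V) (A : Set V) : Prop :=
  ∀ x y : V, x ≠ y → ∃ z ∈ A, min (G.edist z x) 2 ≠ min (G.edist z y) 2

/-- The adjacency dimension of `G`. -/
noncomputable def adim {V : Type*} [Fintype V] [DecidableEq V] (G : SimpleGraph V) : ℕ :=
  sInf {n | ∃ A : Finset V, IsAdjResolving G ↑A ∧ A.card = n}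

/-- `C` is a locating-dominating set of `G`. -/
def IsLocDom {V : Type*} (G : SimpleGraph V) (C : Set V) : Prop :=
  (∀ v ∉ C, ((G.neighborSet v ∪ {v}) ∩ C).Nonempty) ∧
  ∀ u ∉ C, ∀ v ∉ C, u ≠ v →
    (G.neighborSet u ∪ {u}) ∩ C ≠ (G.neighborSet v ∪ {v}) ∩ C

/-- The locating-dominating number of `G`. -/
noncomputable def LD {V : Type*} [Fintype V] [DecidableEq V] (G : SimpleGraph V) : ℕ :=
  sInf {n | ∃ C : Finset V, IsLocDom G ↑C ∧ C.card = n}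

/-- `f` is a resolving broadcast of `G`. -/
def IsResolvingBroadcast {V : Type*} (G : SimpleGraph V) (f : V → ℕ) : Prop :=
  ∀ x y : V, x ≠ y → ∃ z, 0 < f z ∧
    min (G.edist z x) ((f z : ℕ∞) + 1) ≠ min (G.edist z y) ((f z : ℕ∞) + 1)

/-- The broadcast dimension of `G`. -/
noncomputable def bdim {V : Type*} [Fintype V] (G : SimpleGraph V) : ℕ :=
  sInf {n | ∃ f : V → ℕ, IsResolvingBroadcast G f ∧ ∑ v, f v = n}

/-- There is a directed path of length `m` from `u` to `v` in the digraph `D`. -/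
def DPath {V : Type*} (D : V → V → Prop) (u v : V) (m : ℕ) : Prop :=
  ∃ p : Fin (m + 1) → V, p 0 = u ∧ p (Fin.last m) = v ∧
    ∀ i : Fin m, D (p i.castSucc) (p i.succ)

/-- Directed distance in the digraph `D` (∞ if there is no directed path). -/
noncomputable def ddist {V : Type*} (D : V → V → Prop) (u v : V) : ℕ∞ :=
  sInf {n : ℕ∞ | ∃ m : ℕ, DPath D u v m ∧ n = m}

/-- `A` is an adjacency resolving set of the digraph `D`. -/
def IsDirAdjResolving {V : Type*} (D : V → V → Prop) (A : Set V) : Prop :=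
  ∀ x y : V, x ≠ y → ∃ z ∈ A, min (ddist D z x) 2 ≠ min (ddist D z y) 2

/-- The adjacency dimension of the digraph `D`. -/
noncomputable def dirAdim {V : Type*} [Fintype V] [DecidableEq V] (D : V → V → Prop) : ℕ :=
  sInf {n | ∃ A : Finset V, IsDirAdjResolving D ↑A ∧ A.card = n}

/-- `f` is a resolving broadcast of the digraph `D`. -/
def IsDirResolvingBroadcast {V : Type*} (D : V → V → Prop) (f : V → ℕ) : Prop :=
  ∀ x y : V, x ≠ y → ∃ z, 0 < f z ∧
    min (ddist D z x) ((f z : ℕ∞) + 1) ≠ min (ddist D z y) ((f z : ℕ∞) + 1)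

/-- The broadcast dimension of the digraph `D`. -/
noncomputable def dirBdim {V : Type*} [Fintype V] (D : V → V → Prop) : ℕ :=
  sInf {n | ∃ f : V → ℕ, IsDirResolvingBroadcast D f ∧ ∑ v, f v = n}

/-- `D` is an orientation of the simple graph `G`. -/
def IsOrientation {V : Type*} (G : SimpleGraph V) (D : V → V → Prop) : Prop :=
  (∀ u v, G.Adj u v ↔ (D u v ∨ D v u)) ∧ ∀ u v, ¬(D u v ∧ D v u)

/-- The adjacency dimension: minimum total weight of a resolving broadcast
taking values in {0,1}. -/
noncomputable def dirAdimB {V : Type*} [Fintype V] (D : V → V → Prop) : ℕ :=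
  sInf {n | ∃ f : V → ℕ, IsDirResolvingBroadcast D f ∧ (∀ v, f v ≤ 1) ∧ ∑ v, f v = n}


section Infra

variable {V : Type*} {D : V → V → Prop}

lemma dpath_refl (u : V) : DPath D u u 0 :=
  ⟨fun _ => u, rfl, rfl, fun i => i.elim0⟩

lemma dpath_single {u v : V} (h : D u v) : DPath D u v 1 := by
  refine ⟨![u, v], rfl, rfl, ?_⟩
  intro i
  fin_cases i
  simpa using h

lemma dpath_snoc {u v w : V} {m : ℕ} (h : DPath D u v m) (hvw : D v w) :
    DPath D u w (m + 1) := by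
  obtain ⟨p, h0, hl, he⟩ := h
  refine ⟨Fin.snoc p w, ?_, ?_, ?_⟩
  · rw [show (0 : Fin (m + 2)) = Fin.castSucc 0 from rfl, Fin.snoc_castSucc]
    exact h0
  · simp
  · intro i
    refine Fin.lastCases ?_ ?_ i
    · rw [Fin.succ_last, Fin.snoc_last, Fin.snoc_castSucc, hl]
      exact hvw
    · intro j
      rw [Fin.succ_castSucc, Fin.snoc_castSucc, Fin.snoc_castSucc]
      exact he j

lemma dpath_unsnoc {u v : V} {m : ℕ} (h : DPath D u v (m + 1)) :
    ∃ w, DPath D u w m ∧ D w v := by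
  obtain ⟨p, h0, hl, he⟩ := h
  refine ⟨p (Fin.castSucc (Fin.last m)), ⟨fun i => p (Fin.castSucc i), ?_, rfl, fun i => ?_⟩, ?_⟩
  · simpa using h0
  · show D (p (Fin.castSucc (Fin.castSucc i))) (p (Fin.castSucc i.succ))
    rw [← Fin.succ_castSucc]
    exact he (Fin.castSucc i)
  · have := he (Fin.last m)
    rwa [Fin.succ_last, hl] at this

lemma dpath_zero_eq {u v : V} (h : DPath D u v 0) : u = v := by
  obtain ⟨p, h0, hl, -⟩ := h
  rw [← h0, ← hl]
  rfl

lemma dpath_trans {u v w : V} {a b : ℕ} (h1 : DPath D u v a) (h2 : DPath D v w b) :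
    DPath D u w (a + b) := by
  induction b generalizing w with
  | zero =>
    have := dpath_zero_eq h2
    subst this
    simpa using h1
  | succ b ih =>
    obtain ⟨x, hx, hxw⟩ := dpath_unsnoc h2
    exact dpath_snoc (ih hx) hxw

lemma reach_of_dpath {u v : V} {m : ℕ} (h : DPath D u v m) : Relation.ReflTransGen D u v := by
  induction m generalizing v with
  | zero => exact (dpath_zero_eq h) ▸ Relation.ReflTransGen.refl
  | succ m ih =>
    obtain ⟨w, h1, h2⟩ := dpath_unsnoc h
    exact (ih h1).tail h2

lemma dpath_of_reach {u v : V} (h : Relation.ReflTransGen D u v) : ∃ m, DPath D u v m := by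
  induction h with
  | refl => exact ⟨0, dpath_refl u⟩
  | tail _ h ih =>
    obtain ⟨m, hm⟩ := ih
    exact ⟨m + 1, dpath_snoc hm h⟩

lemma ddist_le_of_dpath {u v : V} {m : ℕ} (h : DPath D u v m) : ddist D u v ≤ m :=
  sInf_le ⟨m, h, rfl⟩

lemma ddist_eq_top {u v : V} (h : ¬ Relation.ReflTransGen D u v) : ddist D u v = ⊤ := by
  rw [ddist, sInf_eq_top]
  rintro a ⟨m, hm, rfl⟩
  exact absurd (reach_of_dpath hm) h

lemma min_cap_ne {a b : ℕ∞} {k : ℕ} :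
    min a ((k : ℕ∞) + 1) ≠ min b ((k : ℕ∞) + 1) ↔ a ≠ b ∧ min a b ≤ (k : ℕ∞) := by
  have hkt : (k : ℕ∞) ≠ ⊤ := by simp
  have hklt : (k : ℕ∞) < (k : ℕ∞) + 1 := ENat.lt_add_one_iff hkt |>.mpr le_rfl
  constructor
  · intro h
    refine ⟨fun e => h (by rw [e]), ?_⟩
    by_contra hk
    push_neg at hk
    rw [lt_min_iff] at hk
    have h1 : (k : ℕ∞) + 1 ≤ a := ENat.add_one_le_iff hkt |>.mpr hk.1
    have h2 : (k : ℕ∞) + 1 ≤ b := ENat.add_one_le_iff hkt |>.mpr hk.2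
    rw [min_eq_right h1, min_eq_right h2] at h
    exact h rfl
  · rintro ⟨hne, hmin⟩
    rcases le_total a b with hab | hab
    · rw [min_eq_left hab] at hmin
      have ha : a < (k : ℕ∞) + 1 := lt_of_le_of_lt hmin hklt
      rw [min_eq_left ha.le]
      exact fun e => ((lt_min (hab.lt_of_ne hne) ha).ne) e
    · rw [min_eq_right hab] at hmin
      have hb : b < (k : ℕ∞) + 1 := lt_of_le_of_lt hmin hklt
      rw [min_eq_left hb.le]
      exact fun e => ((lt_min (hab.lt_of_ne (Ne.symm hne)) hb).ne) e.symm

end Infra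

section Reso

variable {V : Type*} {D : V → V → Prop}

/-- Reformulated resolving condition. -/
def Reso (D : V → V → Prop) (f : V → ℕ) (x y : V) : Prop :=
  ∃ z, 0 < f z ∧ ddist D z x ≠ ddist D z y ∧ min (ddist D z x) (ddist D z y) ≤ (f z : ℕ∞)

lemma reso_iff (f : V → ℕ) :
    IsDirResolvingBroadcast D f ↔ ∀ x y : V, x ≠ y → Reso D f x y := by
  constructor
  · intro h x y hxy
    obtain ⟨z, h1, h2⟩ := h x y hxy
    rw [min_cap_ne] at h2
    exact ⟨z, h1, h2.1, h2.2⟩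
  · intro h x y hxy
    obtain ⟨z, h1, h2, h3⟩ := h x y hxy
    exact ⟨z, h1, min_cap_ne.mpr ⟨h2, h3⟩⟩

lemma reso_symm {f : V → ℕ} {x y : V} (h : Reso D f x y) : Reso D f y x := by
  obtain ⟨z, h1, h2, h3⟩ := h
  exact ⟨z, h1, h2.symm, by rw [min_comm]; exact h3⟩

lemma reso_mono {f g : V → ℕ} (h : ∀ v, f v ≤ g v) {x y : V} (hr : Reso D f x y) :
    Reso D g x y := by
  obtain ⟨z, h1, h2, h3⟩ := hr
  exact ⟨z, lt_of_lt_of_le h1 (h z), h2, h3.trans (by exact_mod_cast h z)⟩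

lemma sum_upd {V : Type*} [Fintype V] [DecidableEq V] (f wt : V → ℕ) (z : V) (a : ℕ) :
    (∑ v, Function.update f z a v * wt v) + f z * wt z
      = (∑ v, f v * wt v) + a * wt z := by
  have h1 := Finset.sum_eq_sum_sdiff_singleton_add (Finset.mem_univ z)
    (fun v => Function.update f z a v * wt v)
  have h2 := Finset.sum_eq_sum_sdiff_singleton_add (Finset.mem_univ z)
    (fun v => f v * wt v)
  have hS : ∑ v ∈ Finset.univ \ {z}, Function.update f z a v * wt v
      = ∑ v ∈ Finset.univ \ {z}, f v * wt v := by
    refine Finset.sum_congr rfl fun v hv => ?_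
    rw [Function.update_of_ne (by simpa using (Finset.mem_sdiff.1 hv).2)]
  rw [h1, h2, hS, Function.update_self]
  ring

lemma sum_upd1 {V : Type*} [Fintype V] [DecidableEq V] (f : V → ℕ) (z : V) (a : ℕ) :
    (∑ v, Function.update f z a v) + f z = (∑ v, f v) + a := by
  simpa using sum_upd f (fun _ => 1) z a

end Reso

section MainLemma

variable {V : Type*} {D : V → V → Prop}

lemma ddist_self (u : V) : ddist D u u = 0 :=
  le_antisymm (by simpa using ddist_le_of_dpath (dpath_refl (D := D) u)) zero_le

lemma ddist_pos {u v : V} (h : u ≠ v) : 1 ≤ ddist D u v := by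
  apply le_sInf
  rintro b ⟨m, hm, rfl⟩
  cases m with
  | zero => exact absurd (dpath_zero_eq hm) h
  | succ m => exact_mod_cast Nat.one_le_iff_ne_zero.mpr (Nat.succ_ne_zero m)

lemma ddist_ne_zero {u v : V} (h : u ≠ v) : ddist D u v ≠ 0 :=
  (lt_of_lt_of_le zero_lt_one (ddist_pos h)).ne'

lemma main_lemma {V : Type*} [Fintype V] (D : V → V → Prop) (r : V)
    (hreach : ∀ v, Relation.ReflTransGen D r v)
    (hparent : ∀ v, v ≠ r → ∃! u, D u v)
    (hroot : ∀ u, ¬ D u r)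
    (f₀ : V → ℕ) (hf₀ : ∀ x y : V, x ≠ y → Reso D f₀ x y) :
    ∃ g : V → ℕ, (∀ x y : V, x ≠ y → Reso D g x y) ∧ (∀ v, g v ≤ 1) ∧
      ∑ v, g v ≤ ∑ v, f₀ v := by
  classical
  have hdep : ∀ v : V, ∃ m, DPath D r v m := fun v => dpath_of_reach (hreach v)
  obtain ⟨dep, depP⟩ : ∃ dep : V → ℕ, ∀ v, DPath D r v (dep v) :=
    ⟨fun v => (hdep v).choose, fun v => (hdep v).choose_spec⟩
  -- length uniqueness from the root
  have lu : ∀ (m m' : ℕ) (v : V), DPath D r v m → DPath D r v m' → m = m' := by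
    intro m
    induction m with
    | zero =>
      intro m' v h h'
      have hrv := dpath_zero_eq h
      subst hrv
      cases m' with
      | zero => rfl
      | succ m' =>
        obtain ⟨w, -, hw⟩ := dpath_unsnoc h'
        exact absurd hw (hroot w)
    | succ m ih =>
      intro m' v h h'
      obtain ⟨w, hw1, hw2⟩ := dpath_unsnoc h
      have hvr : v ≠ r := fun e => hroot w (e ▸ hw2)
      cases m' with
      | zero => exact absurd (dpath_zero_eq h').symm hvr
      | succ m' =>
        obtain ⟨w', hw1', hw2'⟩ := dpath_unsnoc h'
        obtain ⟨u, -, huq⟩ := hparent v hvr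
        have hww : w' = w := (huq w' hw2').trans (huq w hw2).symm
        rw [hww] at hw1'
        rw [ih m' w hw1 hw1']
  have dpath_dep : ∀ (u v : V) (m : ℕ), DPath D u v m → dep v = dep u + m := by
    intro u v m h
    exact lu (dep v) (dep u + m) v (depP v) (dpath_trans (depP u) h)
  have ddist_eq : ∀ (u v : V) (m : ℕ), DPath D u v m → ddist D u v = (m : ℕ∞) := by
    intro u v m h
    refine le_antisymm (ddist_le_of_dpath h) (le_sInf ?_)
    rintro b ⟨m', h', rfl⟩
    have e1 : dep v = dep u + m := dpath_dep u v m h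
    have e2 : dep v = dep u + m' := dpath_dep u v m' h'
    have : m = m' := by omega
    exact_mod_cast this.le
  have reach_spec : ∀ u v : V, Relation.ReflTransGen D u v →
      ∃ m : ℕ, ddist D u v = (m : ℕ∞) ∧ dep v = dep u + m := by
    intro u v h
    obtain ⟨m, hm⟩ := dpath_of_reach h
    exact ⟨m, ddist_eq u v m hm, dpath_dep u v m hm⟩
  have reach_of_ne_top : ∀ u v : V, ddist D u v ≠ ⊤ → Relation.ReflTransGen D u v := by
    intro u v h
    by_contra hc
    exact h (ddist_eq_top hc)
  have dep_r : dep r = 0 := lu (dep r) 0 r (depP r) (dpath_refl r)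
  have edge_dep : ∀ u v : V, D u v → dep v = dep u + 1 :=
    fun u v h => dpath_dep u v 1 (dpath_single h)
  -- ancestors of a common vertex are comparable
  have reach_total : ∀ (x a b : V), Relation.ReflTransGen D a x → Relation.ReflTransGen D b x →
      Relation.ReflTransGen D a b ∨ Relation.ReflTransGen D b a := by
    have key : ∀ (n : ℕ) (x a b : V), dep x ≤ n → Relation.ReflTransGen D a x →
        Relation.ReflTransGen D b x →
        Relation.ReflTransGen D a b ∨ Relation.ReflTransGen D b a := by
      intro n
      induction n with
      | zero =>
        intro x a b hdx hax hbx
        by_cases hx : a = x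
        · subst hx; exact Or.inr hbx
        · exfalso
          obtain ⟨m, hm⟩ := dpath_of_reach hax
          cases m with
          | zero => exact hx (dpath_zero_eq hm)
          | succ m =>
            obtain ⟨w, hw1, hw2⟩ := dpath_unsnoc hm
            have h1 := edge_dep w x hw2
            omega
      | succ n ih =>
        intro x a b hdx hax hbx
        by_cases hax' : a = x
        · subst hax'; exact Or.inr hbx
        by_cases hbx' : b = x
        · subst hbx'; exact Or.inl hax
        obtain ⟨m, hm⟩ := dpath_of_reach hax
        cases m with
        | zero => exact absurd (dpath_zero_eq hm) hax'
        | succ m =>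
        obtain ⟨w, hw1, hw2⟩ := dpath_unsnoc hm
        obtain ⟨m', hm'⟩ := dpath_of_reach hbx
        cases m' with
        | zero => exact absurd (dpath_zero_eq hm') hbx'
        | succ m' =>
        obtain ⟨w', hw1', hw2'⟩ := dpath_unsnoc hm'
        have hxr : x ≠ r := fun e => hroot w (e ▸ hw2)
        obtain ⟨u, -, huq⟩ := hparent x hxr
        have hww : w' = w := (huq w' hw2').trans (huq w hw2).symm
        rw [hww] at hw1'
        have hdw : dep x = dep w + 1 := edge_dep w x hw2
        exact ih w a b (by omega) (reach_of_dpath hw1) (reach_of_dpath hw1')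
    exact fun x a b => key (dep x) x a b le_rfl
  obtain ⟨C, hdC⟩ : ∃ C : ℕ, ∀ v : V, dep v < C :=
    ⟨(Finset.univ.sup dep) + 1, fun v => Nat.lt_succ_of_le (Finset.le_sup (Finset.mem_univ v))⟩
  suffices H : ∀ (n : ℕ) (f : V → ℕ), (∑ v, f v * (C - dep v)) ≤ n →
      (∀ x y : V, x ≠ y → Reso D f x y) →
      ∃ g : V → ℕ, (∀ x y : V, x ≠ y → Reso D g x y) ∧ (∀ v, g v ≤ 1) ∧
        ∑ v, g v ≤ ∑ v, f v by
    exact H _ f₀ le_rfl hf₀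
  intro n
  induction n with
  | zero =>
    intro f hP hf
    refine ⟨f, hf, fun v => ?_, le_rfl⟩
    by_contra hv
    push_neg at hv
    have h1 : 0 < f v * (C - dep v) := Nat.mul_pos (by omega) (by have := hdC v; omega)
    have h2 : f v * (C - dep v) ≤ ∑ u, f u * (C - dep u) :=
      Finset.single_le_sum (f := fun u => f u * (C - dep u)) (fun i _ => Nat.zero_le _)
        (Finset.mem_univ v)
    omega
  | succ n ih =>
    intro f hP hf
    by_cases h1 : ∀ v, f v ≤ 1
    · exact ⟨f, hf, h1, le_rfl⟩
    push_neg at h1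
    obtain ⟨z, hz⟩ := h1
    set k := f z with hk
    set f' := Function.update f z (k - 1) with hf'def
    have hf'z : f' z = k - 1 := by rw [hf'def]; exact Function.update_self z (k - 1) f
    have hf'ne : ∀ v, v ≠ z → f' v = f v := by
      intro v hv
      rw [hf'def]
      exact Function.update_of_ne hv _ _
    have hf'le : ∀ v, f' v ≤ f v := by
      intro v
      by_cases hv : v = z
      · subst hv; rw [hf'z]; omega
      · rw [hf'ne v hv]
    have sumf' : (∑ v, f' v) + 1 = ∑ v, f v := by
      have h := sum_upd1 f z (k - 1)
      rw [← hf'def] at h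
      omega
    have Phif' : (∑ v, f' v * (C - dep v)) + (C - dep z) = ∑ v, f v * (C - dep v) := by
      have h := sum_upd f (fun v => C - dep v) z (k - 1)
      beta_reduce at h
      rw [← hf'def] at h
      have hkk : f z * (C - dep z) = (k - 1) * (C - dep z) + (C - dep z) := by
        have h2 : f z = (k - 1) + 1 := by omega
        calc f z * (C - dep z) = ((k - 1) + 1) * (C - dep z) := by rw [← h2]
          _ = (k - 1) * (C - dep z) + (C - dep z) := by ring
      omega
    by_cases hres' : ∀ x y : V, x ≠ y → Reso D f' x y
    · have hPf' : (∑ v, f' v * (C - dep v)) ≤ n := by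
        have := hdC z
        omega
      obtain ⟨g, hg, hg1, hgs⟩ := ih f' hPf' hres'
      exact ⟨g, hg, hg1, by omega⟩
    · push_neg at hres'
      obtain ⟨x₁, y₁, hxy₁, hun₁⟩ := hres'
      -- pairs not resolved by f' have a unique shape
      have unres : ∀ x y : V, x ≠ y → ¬ Reso D f' x y →
          (ddist D z x = (k : ℕ∞) ∧ (k : ℕ∞) < ddist D z y) ∨
          (ddist D z y = (k : ℕ∞) ∧ (k : ℕ∞) < ddist D z x) := by
        intro x y hxy hun
        obtain ⟨v, hv0, hvne, hvmin⟩ := hf x y hxy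
        have hvz : v = z := by
          by_contra hvz
          exact hun ⟨v, by rw [hf'ne v hvz]; exact hv0, hvne, by rw [hf'ne v hvz]; exact hvmin⟩
        subst hvz
        rw [← hk] at hvmin
        have hnm : ¬ (min (ddist D v x) (ddist D v y) ≤ ((k - 1 : ℕ) : ℕ∞)) := by
          intro hle
          refine hun ⟨v, ?_, hvne, ?_⟩
          · rw [hf'z]; omega
          · rw [hf'z]; exact hle
        push_neg at hnm
        have hmeq : min (ddist D v x) (ddist D v y) = (k : ℕ∞) := by
          refine le_antisymm hvmin ?_
          have h1 : ((k - 1 : ℕ) : ℕ∞) + 1 ≤ min (ddist D v x) (ddist D v y) :=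
            (ENat.add_one_le_iff (by simp)).mpr hnm
          calc (k : ℕ∞) = ((k - 1 : ℕ) : ℕ∞) + 1 := by
                exact_mod_cast congrArg (Nat.cast : ℕ → ℕ∞) (by omega : k = k - 1 + 1)
            _ ≤ _ := h1
        rcases le_total (ddist D v x) (ddist D v y) with hle | hle
        · rw [min_eq_left hle] at hmeq
          exact Or.inl ⟨hmeq, lt_of_le_of_ne (by rw [← hmeq]; exact hle)
            (by rw [← hmeq]; exact hvne)⟩
        · rw [min_eq_right hle] at hmeq
          exact Or.inr ⟨hmeq, lt_of_le_of_ne (by rw [← hmeq]; exact hle)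
            (by rw [← hmeq]; exact hvne.symm)⟩
      obtain ⟨x₀, y₀, hxy₀, hun₀, hx0, hy0⟩ :
          ∃ x y : V, x ≠ y ∧ ¬ Reso D f' x y ∧ ddist D z x = (k : ℕ∞) ∧
            (k : ℕ∞) < ddist D z y := by
        rcases unres x₁ y₁ hxy₁ hun₁ with ⟨h1, h2⟩ | ⟨h1, h2⟩
        · exact ⟨x₁, y₁, hxy₁, hun₁, h1, h2⟩
        · exact ⟨y₁, x₁, hxy₁.symm, fun h => hun₁ (reso_symm h), h1, h2⟩
      have hzx0 : Relation.ReflTransGen D z x₀ := reach_of_ne_top z x₀ (by rw [hx0]; simp)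
      have hdx0 : dep x₀ = dep z + k := by
        obtain ⟨m, hm1, hm2⟩ := reach_spec z x₀ hzx0
        rw [hx0] at hm1
        have : k = m := by exact_mod_cast hm1
        omega
      have hx0r : x₀ ≠ r := by
        intro e
        rw [e, dep_r] at hdx0
        omega
      obtain ⟨w, hwx0, -⟩ := hparent x₀ hx0r
      have hdw : dep x₀ = dep w + 1 := edge_dep w x₀ hwx0
      have hwz : w ≠ z := by intro e; rw [e] at hdw; omega
      set f'' := Function.update f' w (f' w + 1) with hf''def
      have hf''w : f'' w = f' w + 1 := by rw [hf''def]; exact Function.update_self w _ f'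
      have hf''ge : ∀ v, f' v ≤ f'' v := by
        intro v
        by_cases hv : v = w
        · subst hv; rw [hf''w]; omega
        · rw [hf''def, Function.update_of_ne hv]
      -- uniqueness of the bad vertex
      have huniq : ∀ x y : V, x ≠ y → ¬ Reso D f' x y → ddist D z x = (k : ℕ∞) →
          (k : ℕ∞) < ddist D z y → x = x₀ := by
        intro x y hxy hun hx hy
        by_contra hxx0
        have hzx : Relation.ReflTransGen D z x := reach_of_ne_top z x (by rw [hx]; simp)
        have hdx : dep x = dep z + k := by
          obtain ⟨m, hm1, hm2⟩ := reach_spec z x hzx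
          rw [hx] at hm1
          have : k = m := by exact_mod_cast hm1
          omega
        obtain ⟨v, hv0, hvne, hvmin⟩ := hf x x₀ hxx0
        have hvz : v ≠ z := by
          intro e; rw [e, hx, hx0] at hvne; exact hvne rfl
        have hfv : f' v = f v := hf'ne v hvz
        by_cases hvx : v = x
        · subst hvx
          refine hun ⟨v, by rw [hfv]; exact hv0, ?_, ?_⟩
          · rw [ddist_self v]
            exact fun e => (ddist_ne_zero hxy) e.symm
          · rw [ddist_self v, min_eq_left zero_le]
            exact zero_le
        by_cases hvx0 : v = x₀
        · subst hvx0
          refine hun₀ ⟨v, by rw [hfv]; exact hv0, ?_, ?_⟩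
          · rw [ddist_self v]
            exact fun e => (ddist_ne_zero hxy₀) e.symm
          · rw [ddist_self v, min_eq_left zero_le]
            exact zero_le
        by_cases hrx : Relation.ReflTransGen D v x <;>
          by_cases hrx0 : Relation.ReflTransGen D v x₀
        · obtain ⟨m1, hm11, hm12⟩ := reach_spec v x hrx
          obtain ⟨m2, hm21, hm22⟩ := reach_spec v x₀ hrx0
          have : m1 = m2 := by omega
          exact hvne (by rw [hm11, hm21, this])
        · -- v reaches x but not x₀
          have hzv : Relation.ReflTransGen D z v := by
            rcases reach_total x v z hrx hzx with h | h
            · exact absurd (h.trans hzx0) hrx0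
            · exact h
          obtain ⟨m1, hm11, hm12⟩ := reach_spec v x hrx
          refine hun ⟨v, by rw [hfv]; exact hv0, ?_, ?_⟩
          · rw [hm11]
            intro e
            have hvy : Relation.ReflTransGen D v y := reach_of_ne_top v y (by rw [← e]; simp)
            obtain ⟨m3, hm31, hm32⟩ := reach_spec v y hvy
            have hcast : (m1 : ℕ∞) = (m3 : ℕ∞) := by rw [e, hm31]
            have hm1m3 : m1 = m3 := by exact_mod_cast hcast
            have hzy : Relation.ReflTransGen D z y := hzv.trans hvy
            obtain ⟨m4, hm41, hm42⟩ := reach_spec z y hzy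
            have : m4 = k := by omega
            rw [hm41, this] at hy
            exact lt_irrefl _ hy
          · have htop : ddist D v x₀ = ⊤ := ddist_eq_top hrx0
            rw [htop] at hvmin
            calc min (ddist D v x) (ddist D v y) ≤ ddist D v x := min_le_left _ _
              _ ≤ ((f v : ℕ) : ℕ∞) := by simpa using hvmin
              _ = ((f' v : ℕ) : ℕ∞) := by rw [hfv]
        · -- v reaches x₀ but not x
          have hzv : Relation.ReflTransGen D z v := by
            rcases reach_total x₀ v z hrx0 hzx0 with h | h
            · exact absurd (h.trans hzx) hrx
            · exact h
          obtain ⟨m2, hm21, hm22⟩ := reach_spec v x₀ hrx0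
          refine hun₀ ⟨v, by rw [hfv]; exact hv0, ?_, ?_⟩
          · rw [hm21]
            intro e
            have hvy : Relation.ReflTransGen D v y₀ := reach_of_ne_top v y₀ (by rw [← e]; simp)
            obtain ⟨m3, hm31, hm32⟩ := reach_spec v y₀ hvy
            have hcast : (m2 : ℕ∞) = (m3 : ℕ∞) := by rw [e, hm31]
            have hm2m3 : m2 = m3 := by exact_mod_cast hcast
            have hzy : Relation.ReflTransGen D z y₀ := hzv.trans hvy
            obtain ⟨m4, hm41, hm42⟩ := reach_spec z y₀ hzy
            have : m4 = k := by omega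
            rw [hm41, this] at hy0
            exact lt_irrefl _ hy0
          · have htop : ddist D v x = ⊤ := ddist_eq_top hrx
            rw [htop] at hvmin
            calc min (ddist D v x₀) (ddist D v y₀) ≤ ddist D v x₀ := min_le_left _ _
              _ ≤ ((f v : ℕ) : ℕ∞) := by simpa using hvmin
              _ = ((f' v : ℕ) : ℕ∞) := by rw [hfv]
        · rw [ddist_eq_top hrx, ddist_eq_top hrx0] at hvne
          exact hvne rfl
      -- the parent w of x₀ resolves all remaining pairs
      have hw_res : ∀ x y : V, x ≠ y → ¬ Reso D f' x y → ddist D z x = (k : ℕ∞) →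
          (k : ℕ∞) < ddist D z y → Reso D f'' x y := by
        intro x y hxy hun hx hy
        have hxeq : x = x₀ := huniq x y hxy hun hx hy
        subst hxeq
        refine ⟨w, by rw [hf''w]; omega, ?_, ?_⟩
        · rw [ddist_eq w x 1 (dpath_single hwx0)]
          intro e
          have hvy : Relation.ReflTransGen D w y := reach_of_ne_top w y (by rw [← e]; simp)
          obtain ⟨m3, hm31, hm32⟩ := reach_spec w y hvy
          have hm3 : m3 = 1 := by exact_mod_cast (e.trans hm31).symm
          have hzw : Relation.ReflTransGen D z w := by
            rcases reach_total x w z (Relation.ReflTransGen.single hwx0) hzx0 with h | h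
            · exfalso
              obtain ⟨m5, hm51, hm52⟩ := reach_spec w z h
              omega
            · exact h
          have hzy : Relation.ReflTransGen D z y := hzw.trans hvy
          obtain ⟨m4, hm41, hm42⟩ := reach_spec z y hzy
          have : m4 = k := by omega
          rw [hm41, this] at hy
          exact lt_irrefl _ hy
        · rw [ddist_eq w x 1 (dpath_single hwx0)]
          calc min ((1 : ℕ) : ℕ∞) (ddist D w y) ≤ ((1 : ℕ) : ℕ∞) := min_le_left _ _
            _ ≤ ((f'' w : ℕ) : ℕ∞) := by
                rw [hf''w]
                exact_mod_cast Nat.le_add_left 1 (f' w)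
      have hres'' : ∀ x y : V, x ≠ y → Reso D f'' x y := by
        intro x y hxy
        by_cases hxy' : Reso D f' x y
        · exact reso_mono hf''ge hxy'
        rcases unres x y hxy hxy' with ⟨ha, hb⟩ | ⟨ha, hb⟩
        · exact hw_res x y hxy hxy' ha hb
        · exact reso_symm (hw_res y x hxy.symm (fun h => hxy' (reso_symm h)) ha hb)
      have sumf'' : ∑ v, f'' v = ∑ v, f v := by
        have h := sum_upd1 f' w (f' w + 1)
        rw [← hf''def] at h
        omega
      have Phif'' : (∑ v, f'' v * (C - dep v)) + (C - dep w)
          = (∑ v, f' v * (C - dep v)) + ((C - dep w) + (C - dep w)) := by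
        have h := sum_upd f' (fun v => C - dep v) w (f' w + 1)
        beta_reduce at h
        rw [← hf''def] at h
        have hmul : (f' w + 1) * (C - dep w) = f' w * (C - dep w) + (C - dep w) := by ring
        omega
      have hPf'' : (∑ v, f'' v * (C - dep v)) ≤ n := by
        have h1 := hdC z
        have h2 := hdC w
        omega
      obtain ⟨g, hg, hg1, hgs⟩ := ih f'' hPf'' hres''
      exact ⟨g, hg, hg1, by omega⟩

end MainLemma

/-- For a finite directed rooted tree with all edges directed away from the
root, `adim(G⃗) = bdim(G⃗)`. -/
theorem stmt_17 {V : Type*} [Fintype V] (D : V → V → Prop) (r : V)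
    (hreach : ∀ v, Relation.ReflTransGen D r v)
    (hparent : ∀ v, v ≠ r → ∃! u, D u v)
    (hroot : ∀ u, ¬ D u r) :
    dirAdimB D = dirBdim D := by
  classical
  have hf1 : ∀ x y : V, x ≠ y → Reso D (fun _ => 1) x y := by
    intro x y hxy
    refine ⟨x, one_pos, ?_, ?_⟩
    · rw [ddist_self x]
      exact fun e => (ddist_ne_zero hxy) e.symm
    · rw [ddist_self x, min_eq_left zero_le]
      exact zero_le
  have hSa : {n | ∃ f : V → ℕ, IsDirResolvingBroadcast D f ∧ (∀ v, f v ≤ 1) ∧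
      ∑ v, f v = n}.Nonempty :=
    ⟨_, (fun _ => 1), (reso_iff _).mpr hf1, fun v => le_rfl, rfl⟩
  have hSb : {n | ∃ f : V → ℕ, IsDirResolvingBroadcast D f ∧ ∑ v, f v = n}.Nonempty :=
    ⟨_, (fun _ => 1), (reso_iff _).mpr hf1, rfl⟩
  apply le_antisymm
  · -- dirAdimB ≤ dirBdim
    obtain ⟨f, hf, hsum⟩ := Nat.sInf_mem hSb
    obtain ⟨g, hg, hg1, hgs⟩ := main_lemma D r hreach hparent hroot f ((reso_iff f).mp hf)
    have h1 : dirAdimB D ≤ ∑ v, g v := Nat.sInf_le ⟨g, (reso_iff g).mpr hg, hg1, rfl⟩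
    exact h1.trans (hgs.trans hsum.le)
  · -- dirBdim ≤ dirAdimB
    obtain ⟨f, hf, hf1', hsum⟩ := Nat.sInf_mem hSa
    have h1 : dirBdim D ≤ ∑ v, f v := Nat.sInf_le ⟨f, hf, rfl⟩
    exact h1.trans hsum.le
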